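/- If ψ is a first-order formula, X a team with dom(X) = {w̄}, FV(ψ) ⊆ {w̄} and w₀ ∈ w̄, then M,X ⊨_mt ψ ⩓ ∃w̄ (w₀ = w₀ ∨ w₀ ≠ w₀) if and only if X ⊆ ⟦ψ⟧^M_{w̄}. -/

import Mathlib

set_option linter.unusedSectionVars false

namespace Paper

/-- A first-order vocabulary (signature): function and relation symbols with arities. -/
structure Sig where
  Func : Type
  arF : Func → ℕ
  Rel : Type
  arR : Rel → ℕ

/-- A τ-structure with universe `α`. -/
structure Struc (σ : Sig) (α : Type) where
  interpF : (f : σ.Func) → (Fin (σ.arF f) → α) → α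
  interpR : (r : σ.Rel) → (Fin (σ.arR r) → α) → Prop

/-- First-order terms; variables are natural numbers. -/
inductive Term (σ : Sig) where
  | var : ℕ → Term σ
  | func : (f : σ.Func) → (Fin (σ.arF f) → Term σ) → Term σ

/-- Interpretation of a term under an assignment. -/
def Term.eval {σ : Sig} {α : Type} (𝕄 : Struc σ α) (s : ℕ → α) : Term σ → α
  | .var x => s x
  | .func f ts => 𝕄.interpF f (fun i => (ts i).eval 𝕄 s)

/-- Variables occurring in a term. -/
def Term.fv {σ : Sig} : Term σ → Finset ℕ
  | .var x => {x}
  | .func _ ts => Finset.univ.biUnion fun i => (ts i).fv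

/-- A team: a finite set of variables (the domain) together with a set of assignments.
Assignments are encoded as total functions `ℕ → α` that take the value `default`
outside the domain of the team (so that an assignment `s : dom(X) → M` is identified
with its extension by `default`). -/
structure Team (α : Type) [Inhabited α] where
  dom : Finset ℕ
  assignments : Set (ℕ → α)
  supported : ∀ s ∈ assignments, ∀ y ∉ dom, s y = default

variable {σ : Sig} {α : Type} [Inhabited α]

/-- The team `∃x X`: domain `dom(X) \ {x}`, consisting of all (supported) `s` such that
`s[a/x] ∈ X` for some `a` (which subsumes the clause "or `s ∈ X`" in the encoding). -/
def Team.eexists (x : ℕ) (X : Team α) : Team α where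
  dom := X.dom.erase x
  assignments := {s | (∀ y ∉ X.dom.erase x, s y = default) ∧
    ∃ a : α, Function.update s x a ∈ X.assignments}
  supported := fun _ hs => hs.1

/-- The team `∀x X`: domain `dom(X) \ {x}`, consisting of all (supported) `s` such that
`s[a/x] ∈ X` for all `a ∈ M` (when `x ∈ dom(X)`), or `s ∈ X` (when `x ∉ dom(X)`). -/
def Team.eforall (x : ℕ) (X : Team α) : Team α where
  dom := X.dom.erase x
  assignments := {s | (∀ y ∉ X.dom.erase x, s y = default) ∧
    if x ∈ X.dom then ∀ a : α, Function.update s x a ∈ X.assignments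
    else s ∈ X.assignments}
  supported := fun _ hs => hs.1

/-- Iterated application `∃x̄ X`. -/
def Team.eexistsN (l : List ℕ) (X : Team α) : Team α := l.foldr Team.eexists X

/-- Iterated application `∀x̄ X`. -/
def Team.eforallN (l : List ℕ) (X : Team α) : Team α := l.foldr Team.eforall X

/-- Restriction of an assignment to a finite set of variables (default outside). -/
def restrictFun (d : Finset ℕ) (s : ℕ → α) : ℕ → α := fun y => if y ∈ d then s y else default

/-- The restriction `X ↾ V` of a team, with domain `dom(X) ∩ V`. -/
def Team.restrict (X : Team α) (V : Finset ℕ) : Team α where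
  dom := X.dom ∩ V
  assignments := {t | ∃ s ∈ X.assignments, t = restrictFun (X.dom ∩ V) s}
  supported := by rintro t ⟨s, _, rfl⟩ y hy; simp only [restrictFun]; exact if_neg hy

/-- The full team on a domain `d`: all (supported) assignments. -/
def Team.full (α : Type) [Inhabited α] (d : Finset ℕ) : Team α where
  dom := d
  assignments := {s | ∀ y ∉ d, s y = default}
  supported := fun _ hs => hs

/-- The complement team `X^c`: all assignments with domain `dom(X)` not in `X`. -/
def Team.compl (X : Team α) : Team α where
  dom := X.dom
  assignments := {s | (∀ y ∉ X.dom, s y = default) ∧ s ∉ X.assignments}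
  supported := fun _ hs => hs.1

/-- Union of two teams. -/
def Team.unionT (X Y : Team α) : Team α where
  dom := X.dom ∪ Y.dom
  assignments := X.assignments ∪ Y.assignments
  supported := by
    rintro s (hs | hs) y hy
    · exact X.supported s hs y (fun h => hy (Finset.mem_union_left _ h))
    · exact Y.supported s hs y (fun h => hy (Finset.mem_union_right _ h))

/-- The team `X[M/x] = {s[a/x] | s ∈ X, a ∈ M}`. -/
def Team.subM (X : Team α) (x : ℕ) : Team α where
  dom := insert x X.dom
  assignments := {t | ∃ s ∈ X.assignments, ∃ a : α, t = Function.update s x a}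
  supported := by
    rintro t ⟨s, hs, a, rfl⟩ y hy
    have hyx : y ≠ x := fun h => hy (h ▸ Finset.mem_insert_self x X.dom)
    rw [Function.update_of_ne hyx]
    exact X.supported s hs y (fun h => hy (Finset.mem_insert_of_mem h))

/-- The team `X[f/x] = {s[f(s)/x] | s ∈ X}` for `f : X → M`. -/
def Team.subf (X : Team α) (x : ℕ) (f : (ℕ → α) → α) : Team α where
  dom := insert x X.dom
  assignments := {t | ∃ s ∈ X.assignments, t = Function.update s x (f s)}
  supported := by
    rintro t ⟨s, hs, rfl⟩ y hy
    have hyx : y ≠ x := fun h => hy (h ▸ Finset.mem_insert_self x X.dom)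
    rw [Function.update_of_ne hyx]
    exact X.supported s hs y (fun h => hy (Finset.mem_insert_of_mem h))

/-- The team `X[F/x] = {s[a/x] | s ∈ X, a ∈ F(s)}` for `F : X → P(M)`. -/
def Team.subF (X : Team α) (x : ℕ) (F : (ℕ → α) → Set α) : Team α where
  dom := insert x X.dom
  assignments := {t | ∃ s ∈ X.assignments, ∃ a ∈ F s, t = Function.update s x a}
  supported := by
    rintro t ⟨s, hs, a, _, rfl⟩ y hy
    have hyx : y ≠ x := fun h => hy (h ▸ Finset.mem_insert_self x X.dom)
    rw [Function.update_of_ne hyx]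
    exact X.supported s hs y (fun h => hy (Finset.mem_insert_of_mem h))

/-- Simultaneous update `s[v̄/x̄]` of an assignment along a list of variables. -/
def updVec (s : ℕ → α) (l : List ℕ) (v : Fin l.length → α) : ℕ → α :=
  fun y => if h : y ∈ l then v ⟨l.idxOf y, List.idxOf_lt_length_iff.mpr h⟩ else s y

theorem updVec_not_mem (s : ℕ → α) (l : List ℕ) (v : Fin l.length → α) {y : ℕ} (h : y ∉ l) :
    updVec s l v y = s y := dif_neg h

/-- The team `X[M/x̄]`. -/
def Team.subMVec (X : Team α) (l : List ℕ) : Team α where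
  dom := X.dom ∪ l.toFinset
  assignments := {t | ∃ s ∈ X.assignments, ∃ v : Fin l.length → α, t = updVec s l v}
  supported := by
    rintro t ⟨s, hs, v, rfl⟩ y hy
    rw [updVec_not_mem s l v (fun h => hy (Finset.mem_union_right _ (List.mem_toFinset.mpr h)))]
    exact X.supported s hs y (fun h => hy (Finset.mem_union_left _ h))

/-- The team `X[F/x̄] = {s[ā/x̄] | s ∈ X, ā ∈ F(s)}` for a set-valued `F`. -/
def Team.subFVec (X : Team α) (l : List ℕ) (F : (ℕ → α) → Set (Fin l.length → α)) :
    Team α where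
  dom := X.dom ∪ l.toFinset
  assignments := {t | ∃ s ∈ X.assignments, ∃ v ∈ F s, t = updVec s l v}
  supported := by
    rintro t ⟨s, hs, v, _, rfl⟩ y hy
    rw [updVec_not_mem s l v (fun h => hy (Finset.mem_union_right _ (List.mem_toFinset.mpr h)))]
    exact X.supported s hs y (fun h => hy (Finset.mem_union_left _ h))

/-- The team `Qx̄ Y = {s : dom(Y)∖{x̄} → M | Y_s(x̄) ∈ Q_M}` for a (local) generalized
quantifier `Q_M` of type `⟨k⟩` where `k` is the length of `x̄`. -/
def Team.qapp (l : List ℕ) (QM : Set (Set (Fin l.length → α))) (Y : Team α) : Team α where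
  dom := Y.dom \ l.toFinset
  assignments := {s | (∀ y ∉ Y.dom \ l.toFinset, s y = default) ∧
    {v : Fin l.length → α | updVec s l v ∈ Y.assignments} ∈ QM}
  supported := fun _ hs => hs.1

/-- `Qx Y` for a (local) generalized quantifier of type `⟨1⟩`. -/
def Team.q1app (x : ℕ) (QM : Set (Set α)) (Y : Team α) : Team α where
  dom := Y.dom.erase x
  assignments := {s | (∀ y ∉ Y.dom.erase x, s y = default) ∧
    {a : α | Function.update s x a ∈ Y.assignments} ∈ QM}
  supported := fun _ hs => hs.1

/-- The team `{ε}` consisting of just the empty assignment. -/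
def epsTeam (α : Type) [Inhabited α] : Team α where
  dom := ∅
  assignments := {fun _ => default}
  supported := by rintro s rfl y _; rfl

/-- `rel(X) ⊆ M^n`: the relation corresponding to a team, with `dom(X)` enumerated in
increasing order. -/
def Team.relSetN (X : Team α) (n : ℕ) (h : X.dom.card = n) : Set (Fin n → α) :=
  {v | ∃ s ∈ X.assignments, ∀ i, v i = s (X.dom.orderEmbOfFin h i)}

end Paper

namespace Paper

/-- Formulas of mt-logic: literals, internal connectives `⩓`/`⩔` (`iand`/`ior`),
external connectives `∧`/`∨` (`eand`/`eor`), and quantifiers. -/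
inductive MForm (σ : Sig) where
  | rel : (r : σ.Rel) → (Fin (σ.arR r) → Term σ) → MForm σ
  | nrel : (r : σ.Rel) → (Fin (σ.arR r) → Term σ) → MForm σ
  | eq : Term σ → Term σ → MForm σ
  | neq : Term σ → Term σ → MForm σ
  | iand : MForm σ → MForm σ → MForm σ
  | ior : MForm σ → MForm σ → MForm σ
  | eand : MForm σ → MForm σ → MForm σ
  | eor : MForm σ → MForm σ → MForm σ
  | ex : ℕ → MForm σ → MForm σ
  | all : ℕ → MForm σ → MForm σ

variable {σ : Sig} {α : Type} [Inhabited α]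

/-- Free variables of an mt-formula. -/
def MForm.fv : MForm σ → Finset ℕ
  | .rel _ ts | .nrel _ ts => Finset.univ.biUnion fun i => (ts i).fv
  | .eq t u | .neq t u => t.fv ∪ u.fv
  | .iand φ ψ | .ior φ ψ | .eand φ ψ | .eor φ ψ => φ.fv ∪ ψ.fv
  | .ex x φ | .all x φ => φ.fv.erase x

/-- Bound variables of an mt-formula. -/
def MForm.bv : MForm σ → Finset ℕ
  | .rel _ _ | .nrel _ _ | .eq _ _ | .neq _ _ => ∅
  | .iand φ ψ | .ior φ ψ | .eand φ ψ | .eor φ ψ => φ.bv ∪ ψ.bv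
  | .ex x φ | .all x φ => insert x φ.bv

/-- All variables occurring in an mt-formula (free, bound, or in terms). -/
def MForm.vars : MForm σ → Finset ℕ
  | .rel _ ts | .nrel _ ts => Finset.univ.biUnion fun i => (ts i).fv
  | .eq t u | .neq t u => t.fv ∪ u.fv
  | .iand φ ψ | .ior φ ψ | .eand φ ψ | .eor φ ψ => φ.vars ∪ ψ.vars
  | .ex x φ | .all x φ => insert x φ.vars

/-- An mt-formula is first-order if it contains no external connective `∧`/`∨`. -/
def MForm.isFO : MForm σ → Prop
  | .eand _ _ | .eor _ _ => False
  | .iand φ ψ | .ior φ ψ => φ.isFO ∧ ψ.isFO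
  | .ex _ φ | .all _ φ => φ.isFO
  | _ => True

/-- No quantifier `Qx` occurs within the scope of another quantifier `Q'x`. -/
def MForm.noRebind : MForm σ → Prop
  | .rel _ _ | .nrel _ _ | .eq _ _ | .neq _ _ => True
  | .iand φ ψ | .ior φ ψ | .eand φ ψ | .eor φ ψ => φ.noRebind ∧ ψ.noRebind
  | .ex x φ | .all x φ => x ∉ φ.bv ∧ φ.noRebind

/-- A formula is untangled if no quantifier `Qx` appears in the scope of another
quantifier `Q'x` and no variable is both free and bound. -/
def MForm.untangled (φ : MForm σ) : Prop := φ.noRebind ∧ Disjoint φ.fv φ.bv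

/-- Ordinary Tarskian satisfaction of an mt-formula by a single assignment
(both internal and external connectives are read classically). -/
def MForm.tsat (𝕄 : Struc σ α) : (ℕ → α) → MForm σ → Prop
  | s, .rel r ts => 𝕄.interpR r fun i => (ts i).eval 𝕄 s
  | s, .nrel r ts => ¬ 𝕄.interpR r fun i => (ts i).eval 𝕄 s
  | s, .eq t u => t.eval 𝕄 s = u.eval 𝕄 s
  | s, .neq t u => t.eval 𝕄 s ≠ u.eval 𝕄 s
  | s, .iand φ ψ => φ.tsat 𝕄 s ∧ ψ.tsat 𝕄 s
  | s, .ior φ ψ => φ.tsat 𝕄 s ∨ ψ.tsat 𝕄 s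
  | s, .eand φ ψ => φ.tsat 𝕄 s ∧ ψ.tsat 𝕄 s
  | s, .eor φ ψ => φ.tsat 𝕄 s ∨ ψ.tsat 𝕄 s
  | s, .ex x φ => ∃ a : α, φ.tsat 𝕄 (Function.update s x a)
  | s, .all x φ => ∀ a : α, φ.tsat 𝕄 (Function.update s x a)

/-- The semantic value `⟦φ⟧^𝕄_{d}`: the team with domain `d` of all assignments
satisfying `φ` in the Tarskian sense. -/
def SemVal (𝕄 : Struc σ α) (d : Finset ℕ) (φ : MForm σ) : Team α where
  dom := d
  assignments := {s | (∀ y ∉ d, s y = default) ∧ φ.tsat 𝕄 s}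
  supported := fun _ hs => hs.1

/-- Team satisfaction for mt-logic. -/
def MSat (𝕄 : Struc σ α) : MForm σ → Team α → Prop
  | .rel r ts, X => ∀ s : ℕ → α, (∀ y ∉ X.dom, s y = default) →
      (s ∈ X.assignments ↔ 𝕄.interpR r fun i => (ts i).eval 𝕄 s)
  | .nrel r ts, X => ∀ s : ℕ → α, (∀ y ∉ X.dom, s y = default) →
      (s ∈ X.assignments ↔ ¬ 𝕄.interpR r fun i => (ts i).eval 𝕄 s)
  | .eq t u, X => ∀ s : ℕ → α, (∀ y ∉ X.dom, s y = default) →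
      (s ∈ X.assignments ↔ t.eval 𝕄 s = u.eval 𝕄 s)
  | .neq t u, X => ∀ s : ℕ → α, (∀ y ∉ X.dom, s y = default) →
      (s ∈ X.assignments ↔ t.eval 𝕄 s ≠ u.eval 𝕄 s)
  | .iand φ ψ, X => ∃ Y Z : Team α, Y.dom = X.dom ∧ Z.dom = X.dom ∧
      X.assignments = Y.assignments ∩ Z.assignments ∧ MSat 𝕄 φ Y ∧ MSat 𝕄 ψ Z
  | .ior φ ψ, X => ∃ Y Z : Team α, Y.dom = X.dom ∧ Z.dom = X.dom ∧
      X.assignments = Y.assignments ∪ Z.assignments ∧ MSat 𝕄 φ Y ∧ MSat 𝕄 ψ Z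
  | .eand φ ψ, X => MSat 𝕄 φ X ∧ MSat 𝕄 ψ X
  | .eor φ ψ, X => MSat 𝕄 φ X ∨ MSat 𝕄 ψ X
  | .ex x φ, X => ∃ Y : Team α, x ∈ Y.dom ∧ Team.eexists x Y = Team.eexists x X ∧ MSat 𝕄 φ Y
  | .all x φ, X => ∃ Y : Team α, x ∈ Y.dom ∧ Team.eforall x Y = Team.eexists x X ∧ MSat 𝕄 φ Y

/-- Iterated existential quantification `∃w̄ φ`. -/
def MForm.exN (l : List ℕ) (φ : MForm σ) : MForm σ := l.foldr MForm.ex φ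

/-- Iterated universal quantification `∀w̄ φ`. -/
def MForm.allN (l : List ℕ) (φ : MForm σ) : MForm σ := l.foldr MForm.all φ

/-- The formula `⊤_{w̄} = ∃w̄ (w₀ = w₀ ∨ w₀ ≠ w₀)` with a designated `w₀ ∈ w̄`
(here `∨` is the external disjunction). -/
def TopW (l : List ℕ) (w₀ : ℕ) : MForm σ :=
  MForm.exN l (MForm.eor (MForm.eq (.var w₀) (.var w₀)) (MForm.neq (.var w₀) (.var w₀)))

/-- `⊤_{w̄}` with `w₀` taken to be the first variable of `w̄`. -/
def Top (l : List ℕ) : MForm σ := TopW l l.headI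

end Paper

namespace Paper

variable {σ : Sig} {α : Type} [Inhabited α]

lemma Team.ext' {X Y : Team α} (h1 : X.dom = Y.dom)
    (h2 : X.assignments = Y.assignments) : X = Y := by
  cases X; cases Y; simp_all

lemma mem_eexists_self {X : Team α} {s : ℕ → α} (hs : s ∈ X.assignments) (x : ℕ) :
    Function.update s x default ∈ (Team.eexists x X).assignments := by
  refine ⟨?_, s x, ?_⟩
  · intro y hy
    by_cases hyx : y = x
    · subst hyx; simp
    · rw [Function.update_of_ne hyx]
      exact X.supported s hs y fun h => hy (Finset.mem_erase.mpr ⟨hyx, h⟩)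
  · rw [Function.update_idem, Function.update_eq_self]
    exact hs

/-- Flatness, one direction: a team satisfying a first-order formula consists of
assignments satisfying it in the Tarskian sense. -/
lemma fo_tsat_of_msat (𝕄 : Struc σ α) :
    ∀ ψ : MForm σ, ψ.isFO → ∀ X : Team α, MSat 𝕄 ψ X →
      ∀ s ∈ X.assignments, ψ.tsat 𝕄 s := by
  intro ψ
  induction ψ with
  | rel r ts => intro _ X h s hs; exact (h s (X.supported s hs)).mp hs
  | nrel r ts => intro _ X h s hs; exact (h s (X.supported s hs)).mp hs
  | eq t u => intro _ X h s hs; exact (h s (X.supported s hs)).mp hs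
  | neq t u => intro _ X h s hs; exact (h s (X.supported s hs)).mp hs
  | iand φ ψ ihφ ihψ =>
      rintro ⟨h1, h2⟩ X ⟨Y, Z, -, -, hint, hY, hZ⟩ s hs
      rw [hint] at hs
      exact ⟨ihφ h1 Y hY s hs.1, ihψ h2 Z hZ s hs.2⟩
  | ior φ ψ ihφ ihψ =>
      rintro ⟨h1, h2⟩ X ⟨Y, Z, -, -, hun, hY, hZ⟩ s hs
      rw [hun] at hs
      rcases hs with hs | hs
      · exact Or.inl (ihφ h1 Y hY s hs)
      · exact Or.inr (ihψ h2 Z hZ s hs)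
  | eand φ ψ _ _ => intro h; cases h
  | eor φ ψ _ _ => intro h; cases h
  | ex x φ ih =>
      rintro hFO X ⟨Y, hx, hE, hY⟩ s hs
      have h1 : Function.update s x default ∈ (Team.eexists x X).assignments :=
        mem_eexists_self hs x
      rw [← hE] at h1
      obtain ⟨-, a, ha⟩ := h1
      refine ⟨a, ?_⟩
      have := ih hFO Y hY _ ha
      rwa [Function.update_idem] at this
  | all x φ ih =>
      rintro hFO X ⟨Y, hx, hE, hY⟩ s hs
      have h1 : Function.update s x default ∈ (Team.eexists x X).assignments :=
        mem_eexists_self hs x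
      rw [← hE] at h1
      obtain ⟨-, h2⟩ := h1
      rw [if_pos hx] at h2
      intro a
      have := ih hFO Y hY _ (h2 a)
      rwa [Function.update_idem] at this

lemma update_supp_insert {d : Finset ℕ} {x : ℕ} {s : ℕ → α} (a : α)
    (hs : ∀ y ∉ d.erase x, s y = default) :
    ∀ y ∉ insert x (d.erase x), Function.update s x a y = default := by
  intro y hy
  have hyx : y ≠ x := fun h => hy (by rw [h]; exact Finset.mem_insert_self x _)
  rw [Function.update_of_ne hyx]
  exact hs y fun h => hy (Finset.mem_insert_of_mem h)

lemma update_supp_default {d : Finset ℕ} {x : ℕ} {s : ℕ → α}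
    (hs : ∀ y ∉ d.erase x, s y = default) :
    ∀ y ∉ d, Function.update s x (default : α) y = default := by
  intro y hy
  by_cases hyx : y = x
  · subst hyx; simp
  · rw [Function.update_of_ne hyx]
    exact hs y fun h => hy (Finset.mem_of_mem_erase h)

lemma semVal_eexists (𝕄 : Struc σ α) (φ : MForm σ) (x : ℕ) (d : Finset ℕ) :
    Team.eexists x (SemVal 𝕄 (insert x (d.erase x)) φ) =
      Team.eexists x (SemVal 𝕄 d (MForm.ex x φ)) := by
  have hdd : (insert x (d.erase x)).erase x = d.erase x := by
    rw [Finset.erase_insert_eq_erase, Finset.erase_idem]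
  apply Team.ext'
  · exact hdd
  · ext s
    simp only [Team.eexists, SemVal, Set.mem_setOf_eq, MForm.tsat, hdd]
    constructor
    · rintro ⟨hsupp, a, -, hts⟩
      exact ⟨hsupp, default, update_supp_default hsupp, a, by rwa [Function.update_idem]⟩
    · rintro ⟨hsupp, a, -, b, htb⟩
      rw [Function.update_idem] at htb
      exact ⟨hsupp, b, update_supp_insert b hsupp, htb⟩

lemma semVal_eforall (𝕄 : Struc σ α) (φ : MForm σ) (x : ℕ) (d : Finset ℕ) :
    Team.eforall x (SemVal 𝕄 (insert x (d.erase x)) φ) =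
      Team.eexists x (SemVal 𝕄 d (MForm.all x φ)) := by
  have hdd : (insert x (d.erase x)).erase x = d.erase x := by
    rw [Finset.erase_insert_eq_erase, Finset.erase_idem]
  apply Team.ext'
  · exact hdd
  · ext s
    simp only [Team.eforall, Team.eexists, SemVal, Set.mem_setOf_eq, MForm.tsat, hdd,
      Finset.mem_insert_self, if_true]
    constructor
    · rintro ⟨hsupp, h⟩
      refine ⟨hsupp, default, update_supp_default hsupp, fun b => ?_⟩
      rw [Function.update_idem]
      exact (h b).2
    · rintro ⟨hsupp, a, -, h⟩
      refine ⟨hsupp, fun b => ⟨update_supp_insert b hsupp, ?_⟩⟩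
      have := h b
      rwa [Function.update_idem] at this

/-- Flatness, other direction: the semantic value of a first-order formula
satisfies it in team semantics. -/
lemma msat_semVal (𝕄 : Struc σ α) :
    ∀ ψ : MForm σ, ψ.isFO → ∀ d : Finset ℕ, MSat 𝕄 ψ (SemVal 𝕄 d ψ) := by
  intro ψ
  induction ψ with
  | rel r ts => intro _ d s hs; exact ⟨fun h => h.2, fun h => ⟨hs, h⟩⟩
  | nrel r ts => intro _ d s hs; exact ⟨fun h => h.2, fun h => ⟨hs, h⟩⟩
  | eq t u => intro _ d s hs; exact ⟨fun h => h.2, fun h => ⟨hs, h⟩⟩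
  | neq t u => intro _ d s hs; exact ⟨fun h => h.2, fun h => ⟨hs, h⟩⟩
  | iand φ ψ ihφ ihψ =>
      rintro ⟨h1, h2⟩ d
      refine ⟨SemVal 𝕄 d φ, SemVal 𝕄 d ψ, rfl, rfl, ?_, ihφ h1 d, ihψ h2 d⟩
      ext s
      simp only [SemVal, Set.mem_setOf_eq, Set.mem_inter_iff, MForm.tsat]
      tauto
  | ior φ ψ ihφ ihψ =>
      rintro ⟨h1, h2⟩ d
      refine ⟨SemVal 𝕄 d φ, SemVal 𝕄 d ψ, rfl, rfl, ?_, ihφ h1 d, ihψ h2 d⟩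
      ext s
      simp only [SemVal, Set.mem_setOf_eq, Set.mem_union, MForm.tsat]
      tauto
  | eand φ ψ _ _ => intro h; cases h
  | eor φ ψ _ _ => intro h; cases h
  | ex x φ ih =>
      intro hFO d
      exact ⟨SemVal 𝕄 (insert x (d.erase x)) φ, Finset.mem_insert_self x _,
        semVal_eexists 𝕄 φ x d, ih hFO _⟩
  | all x φ ih =>
      intro hFO d
      exact ⟨SemVal 𝕄 (insert x (d.erase x)) φ, Finset.mem_insert_self x _,
        semVal_eforall 𝕄 φ x d, ih hFO _⟩

/-- Membership in `X` depends only on the values of the assignment on `l`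
(together with supportedness). -/
def Inv (l : List ℕ) (X : Team α) : Prop :=
  ∀ t, t ∈ X.assignments ↔ ((∀ y ∉ X.dom, t y = default) ∧
    ∃ s ∈ X.assignments, ∀ y ∈ l, t y = s y)

lemma inv_of_dom (l : List ℕ) (X : Team α) (h : X.dom ⊆ l.toFinset) : Inv l X := by
  intro t
  constructor
  · intro ht; exact ⟨X.supported t ht, t, ht, fun _ _ => rfl⟩
  · rintro ⟨hsupp, s, hsX, hag⟩
    have ht : t = s := by
      funext y
      by_cases hy : y ∈ X.dom
      · exact hag y (List.mem_toFinset.mp (h hy))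
      · rw [hsupp y hy, X.supported s hsX y hy]
    rwa [ht]

lemma msat_topW_core (𝕄 : Struc σ α) (w₀ : ℕ) :
    ∀ (l : List ℕ) (X : Team α), Inv l X → MSat 𝕄 (TopW l w₀) X := by
  intro l
  induction l with
  | nil =>
      intro X hInv
      show MSat 𝕄 (MForm.eor (MForm.eq (.var w₀) (.var w₀))
        (MForm.neq (.var w₀) (.var w₀))) X
      by_cases h : X.assignments.Nonempty
      · left
        intro s hs
        refine ⟨fun _ => rfl, fun _ => ?_⟩
        obtain ⟨s₀, hs₀⟩ := h
        exact (hInv s).mpr ⟨hs, s₀, hs₀, by simp⟩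
      · right
        intro s hs
        constructor
        · intro hsX; exact absurd ⟨s, hsX⟩ h
        · intro hne; exact absurd rfl hne
  | cons x l' ih =>
      intro X hInv
      set d' := X.dom.erase x with hd'
      refine (⟨⟨insert x d',
        {t | (∀ y ∉ insert x d', t y = default) ∧
          ∃ a, Function.update t x a ∈ X.assignments},
        fun _ h => h.1⟩, Finset.mem_insert_self x d', ?_, ih _ ?_⟩ :
        MSat 𝕄 (MForm.ex x (TopW l' w₀)) X)
      · -- ∃x Y = ∃x X
        have hdd : (insert x d').erase x = X.dom.erase x := by
          rw [Finset.erase_insert_eq_erase, hd', Finset.erase_idem]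
        apply Team.ext'
        · exact hdd
        · ext s
          simp only [Team.eexists, Set.mem_setOf_eq, hdd]
          constructor
          · rintro ⟨hsupp, a, -, b, hb⟩
            rw [Function.update_idem] at hb
            exact ⟨hsupp, b, hb⟩
          · rintro ⟨hsupp, b, hb⟩
            refine ⟨hsupp, b, ?_, b, by rwa [Function.update_idem]⟩
            intro y hy
            have hyx : y ≠ x := fun h => hy (by rw [h]; exact Finset.mem_insert_self x _)
            rw [Function.update_of_ne hyx]
            exact hsupp y fun h => hy (Finset.mem_insert_of_mem h)
      · -- Inv l' Y
        intro t
        constructor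
        · intro ht; exact ⟨ht.1, t, ht, fun _ _ => rfl⟩
        · rintro ⟨hsupp, s, ⟨hssupp, a, ha⟩, hag⟩
          refine ⟨hsupp, a, ?_⟩
          refine (hInv _).mpr ⟨?_, Function.update s x a, ha, ?_⟩
          · intro y hy
            by_cases hyx : y = x
            · rw [hyx, Function.update_self]
              have h2 := X.supported _ ha x (hyx ▸ hy)
              rwa [Function.update_self] at h2
            · rw [Function.update_of_ne hyx]
              refine hsupp y fun h => ?_
              rcases Finset.mem_insert.mp h with h' | h'
              · exact hyx h'
              · exact hy (Finset.mem_of_mem_erase h')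
          · intro y hy
            by_cases hyx : y = x
            · rw [hyx, Function.update_self, Function.update_self]
            · rw [Function.update_of_ne hyx, Function.update_of_ne hyx]
              rcases List.mem_cons.mp hy with h' | h'
              · exact absurd h' hyx
              · exact hag y h'

/-- STATEMENT 11: If `ψ` is a first-order formula, `X` a team with `dom(X) = {w̄}`
(the variables of the repetition-free list `l`), `FV(ψ) ⊆ {w̄}` and `w₀ ∈ w̄`, then
`M,X ⊨_mt ψ ⩓ ∃w̄ (w₀ = w₀ ∨ w₀ ≠ w₀)` iff `X ⊆ ⟦ψ⟧^M_{w̄}`. -/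
theorem msat_iand_top {σ : Sig} {α : Type} [Inhabited α] (𝕄 : Struc σ α)
    (ψ : MForm σ) (hFO : ψ.isFO) (X : Team α) (hfv : ψ.fv ⊆ X.dom)
    (l : List ℕ) (hnd : l.Nodup) (hl : l.toFinset = X.dom)
    (w₀ : ℕ) (hw₀ : w₀ ∈ X.dom) :
    MSat 𝕄 (MForm.iand ψ (TopW l w₀)) X ↔
      X.assignments ⊆ (SemVal 𝕄 X.dom ψ).assignments := by
  constructor
  · rintro ⟨Y, Z, hY, hZ, hint, hψ, -⟩ s hs
    refine ⟨X.supported s hs, ?_⟩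
    have hsY : s ∈ Y.assignments := by rw [hint] at hs; exact hs.1
    exact fo_tsat_of_msat 𝕄 ψ hFO Y hψ s hsY
  · intro hsub
    refine ⟨SemVal 𝕄 X.dom ψ, X, rfl, rfl, ?_, msat_semVal 𝕄 ψ hFO X.dom, ?_⟩
    · exact (Set.inter_eq_self_of_subset_right hsub).symm
    · exact msat_topW_core 𝕄 w₀ l X (inv_of_dom l X (le_of_eq hl.symm))

end Paper
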